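/- Define g(s) := Q(s) + s φ(s) − φ(s)²/Q(s) for s ∈ ℝ. Then g is differentiable with g′(s) = −(φ(s)/Q(s)²)·( s Q(s) − φ(s) )² for every s ∈ ℝ; consequently g is nonincreasing on ℝ, and g(s) → 0 as s → ∞. -/

import Mathlib

open MeasureTheory intervalIntegral Filter Set


/-- The standard Gaussian pdf. -/
noncomputable def gaussPdf (x : ℝ) : ℝ := (Real.sqrt (2 * Real.pi))⁻¹ * Real.exp (-x ^ 2 / 2)

/-- The standard Gaussian complementary cdf `Q(x) = ∫_x^∞ φ(t) dt`. -/
noncomputable def gaussQ (x : ℝ) : ℝ := ∫ t in Set.Ioi x, gaussPdf t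

lemma pdf_cont : Continuous gaussPdf := by unfold gaussPdf; fun_prop

lemma pdf_pos (x : ℝ) : 0 < gaussPdf x := by
  unfold gaussPdf
  positivity

lemma pdf_int : Integrable gaussPdf := by
  have h := integrable_exp_neg_mul_sq (b := (1:ℝ)/2) (by norm_num)
  have : gaussPdf = fun x => (Real.sqrt (2 * Real.pi))⁻¹ * Real.exp (-(1/2) * x ^ 2) := by
    funext x; unfold gaussPdf; ring_nf
  rw [this]
  exact h.const_mul _

lemma pdf_deriv (x : ℝ) : HasDerivAt gaussPdf (-x * gaussPdf x) x := by
  unfold gaussPdf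
  have h1 : HasDerivAt (fun t : ℝ => -t ^ 2 / 2) (-x) x := by
    have := ((hasDerivAt_pow 2 x).neg).div_const 2
    refine this.congr_deriv ?_; norm_num; ring
  have h2 := (h1.exp).const_mul (Real.sqrt (2 * Real.pi))⁻¹
  refine h2.congr_deriv ?_; ring

lemma Q_pos (x : ℝ) : 0 < gaussQ x := by
  rw [gaussQ, setIntegral_pos_iff_support_of_nonneg_ae]
  · have : Function.support gaussPdf = Set.univ := by
      ext t; simp [Function.mem_support, (pdf_pos t).ne']
    rw [this, Set.univ_inter]
    simp [Real.volume_Ioi]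
  · exact Eventually.of_forall fun t => (pdf_pos t).le
  · exact pdf_int.integrableOn

lemma Q_eq (x : ℝ) : gaussQ x = gaussQ 0 - ∫ t in (0:ℝ)..x, gaussPdf t := by
  have key : ∀ a b : ℝ, a ≤ b → gaussQ a = (∫ t in Set.Ioc a b, gaussPdf t) + gaussQ b := by
    intro a b hab
    rw [gaussQ, gaussQ, ← setIntegral_union]
    · rw [Set.Ioc_union_Ioi_eq_Ioi hab]
    · exact Set.Ioc_disjoint_Ioi le_rfl
    · exact measurableSet_Ioi
    · exact pdf_int.integrableOn
    · exact pdf_int.integrableOn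
  rcases le_total 0 x with h | h
  · rw [intervalIntegral.integral_of_le h, key 0 x h]; ring
  · rw [intervalIntegral.integral_of_ge h, key x 0 h]
    simp [integral_Ioc_eq_integral_Ioo]
    ring

lemma Q_deriv (x : ℝ) : HasDerivAt gaussQ (-gaussPdf x) x := by
  have h : HasDerivAt (fun u => ∫ t in (0:ℝ)..u, gaussPdf t) (gaussPdf x) x := by
    apply intervalIntegral.integral_hasDerivAt_right
    · exact pdf_cont.intervalIntegrable 0 x
    · exact pdf_cont.stronglyMeasurableAtFilter _ _
    · exact pdf_cont.continuousAt
  have h2 := (hasDerivAt_const x (gaussQ 0)).sub h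
  simp only [zero_sub] at h2
  have : (fun u => gaussQ 0 - ∫ t in (0:ℝ)..u, gaussPdf t) = gaussQ := by
    funext u; rw [Q_eq u]
  rw [← this]; exact h2

lemma g_deriv (s : ℝ) :
    HasDerivAt (fun t => gaussQ t + t * gaussPdf t - (gaussPdf t) ^ 2 / gaussQ t)
      (-(gaussPdf s / (gaussQ s) ^ 2) * (s * gaussQ s - gaussPdf s) ^ 2) s := by
  have hQ := Q_deriv s
  have hp := pdf_deriv s
  have h1 : HasDerivAt (fun t : ℝ => t * gaussPdf t) (1 * gaussPdf s + s * (-s * gaussPdf s)) s :=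
    (hasDerivAt_id s).mul hp
  have h2 : HasDerivAt (fun t : ℝ => (gaussPdf t) ^ 2 / gaussQ t)
      ((2 * gaussPdf s ^ 1 * (-s * gaussPdf s) * gaussQ s - gaussPdf s ^ 2 * (-gaussPdf s)) / gaussQ s ^ 2) s :=
    (hp.pow 2).div hQ (Q_pos s).ne'
  have h := (hQ.add h1).sub h2
  refine h.congr_deriv ?_
  have hQ0 := (Q_pos s).ne'
  field_simp
  ring

lemma tends_pdf : Tendsto gaussPdf atTop (nhds 0) := by
  have h1 : Tendsto (fun s : ℝ => -s ^ 2 / 2) atTop atBot := by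
    apply Tendsto.atBot_div_const (by norm_num)
    exact tendsto_neg_atTop_atBot.comp (tendsto_pow_atTop two_ne_zero)
  have h2 := Real.tendsto_exp_atBot.comp h1
  have h3 := h2.const_mul (Real.sqrt (2 * Real.pi))⁻¹
  simp only [Function.comp, mul_zero] at h3
  exact h3

lemma tends_sp : Tendsto (fun s => s * gaussPdf s) atTop (nhds 0) := by
  have h0 : Tendsto (fun s : ℝ => (Real.sqrt (2 * Real.pi))⁻¹ * (s * Real.exp (-s)))
      atTop (nhds 0) := by
    have := (Real.tendsto_pow_mul_exp_neg_atTop_nhds_zero 1).const_mul (Real.sqrt (2 * Real.pi))⁻¹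
    simpa using this
  apply tendsto_of_tendsto_of_tendsto_of_le_of_le' tendsto_const_nhds h0
  · filter_upwards [eventually_ge_atTop (0:ℝ)] with s hs
    exact mul_nonneg hs (pdf_pos s).le
  · filter_upwards [eventually_ge_atTop (2:ℝ)] with s hs
    have hs0 : (0:ℝ) ≤ s := by linarith
    have hexp : Real.exp (-s ^ 2 / 2) ≤ Real.exp (-s) := by
      apply Real.exp_le_exp.mpr; nlinarith
    have hc : (0:ℝ) ≤ (Real.sqrt (2 * Real.pi))⁻¹ := by positivity
    calc s * gaussPdf s = (Real.sqrt (2 * Real.pi))⁻¹ * (s * Real.exp (-s ^ 2 / 2)) := by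
          unfold gaussPdf; ring
      _ ≤ (Real.sqrt (2 * Real.pi))⁻¹ * (s * Real.exp (-s)) := by
          apply mul_le_mul_of_nonneg_left _ hc
          exact mul_le_mul_of_nonneg_left hexp hs0

lemma tends_Q : Tendsto gaussQ atTop (nhds 0) := by
  have h : Tendsto (fun x : ℝ => ∫ t in (0:ℝ)..x, gaussPdf t) atTop (nhds (gaussQ 0)) :=
    intervalIntegral_tendsto_integral_Ioi 0 pdf_int.integrableOn tendsto_id
  have h2 := (tendsto_const_nhds : Tendsto (fun _ : ℝ => gaussQ 0) atTop (nhds (gaussQ 0))).sub h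
  simp only [sub_self] at h2
  convert h2 using 2 with x
  exact Q_eq x

lemma mills (s : ℝ) : s * gaussPdf s / (s ^ 2 + 1) ≤ gaussQ s := by
  set u : ℝ → ℝ := fun s => gaussQ s - s * gaussPdf s / (s ^ 2 + 1) with hu
  have hderiv : ∀ x : ℝ, HasDerivAt u (-(2 * gaussPdf x) / (x ^ 2 + 1) ^ 2) x := by
    intro x
    have hd : (x ^ 2 + 1 : ℝ) ≠ 0 := by positivity
    have h1 : HasDerivAt (fun t : ℝ => t * gaussPdf t) (1 * gaussPdf x + x * (-x * gaussPdf x)) x :=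
      (hasDerivAt_id x).mul (pdf_deriv x)
    have h2 : HasDerivAt (fun t : ℝ => t ^ 2 + 1) (2 * x) x := by
      simpa using (hasDerivAt_pow 2 x).add_const 1
    have h3 := (Q_deriv x).sub (h1.div h2 hd)
    refine h3.congr_deriv ?_
    field_simp
    ring
  have hanti : Antitone u := by
    apply antitone_of_deriv_nonpos
    · exact fun x => ((hderiv x).differentiableAt)
    · intro x
      rw [(hderiv x).deriv]
      have := pdf_pos x
      exact div_nonpos_of_nonpos_of_nonneg (by linarith) (by positivity)
  have htend : Tendsto u atTop (nhds 0) := by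
    have h1 : Tendsto (fun s : ℝ => s * gaussPdf s / (s ^ 2 + 1)) atTop (nhds 0) := by
      apply tendsto_of_tendsto_of_tendsto_of_le_of_le' tendsto_const_nhds tends_sp
      · filter_upwards [eventually_ge_atTop (0:ℝ)] with s hs
        exact div_nonneg (mul_nonneg hs (pdf_pos s).le) (by positivity)
      · filter_upwards [eventually_ge_atTop (0:ℝ)] with s hs
        have h1 : (1:ℝ) ≤ s ^ 2 + 1 := by nlinarith
        have h2 : 0 ≤ s * gaussPdf s := mul_nonneg hs (pdf_pos s).le
        calc s * gaussPdf s / (s ^ 2 + 1) ≤ s * gaussPdf s / 1 :=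
              div_le_div_of_nonneg_left h2 (by norm_num) h1
          _ = s * gaussPdf s := by ring
    have := tends_Q.sub h1
    simpa using this
  have h0 : (0:ℝ) ≤ u s := by
    apply le_of_tendsto htend
    filter_upwards [eventually_ge_atTop s] with t ht
    exact hanti ht
  simpa [hu] using h0

lemma tends_g : Tendsto (fun s => gaussQ s + s * gaussPdf s - (gaussPdf s) ^ 2 / gaussQ s)
    Filter.atTop (nhds 0) := by
  have hlow : Tendsto (fun s => gaussQ s - gaussPdf s) atTop (nhds 0) := by
    simpa using tends_Q.sub tends_pdf
  have hup : Tendsto (fun s => gaussQ s + s * gaussPdf s) atTop (nhds 0) := by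
    simpa using tends_Q.add tends_sp
  apply tendsto_of_tendsto_of_tendsto_of_le_of_le' hlow hup
  · filter_upwards [eventually_ge_atTop (1:ℝ)] with s hs
    have hQ := Q_pos s
    have hf := pdf_pos s
    have hm : s * gaussPdf s / (s ^ 2 + 1) ≤ gaussQ s := mills s
    have hm' : s * gaussPdf s ≤ gaussQ s * (s ^ 2 + 1) := by
      rw [div_le_iff₀ (by positivity)] at hm; linarith
    have key : gaussPdf s ^ 2 / gaussQ s ≤ (s + 1) * gaussPdf s := by
      rw [div_le_iff₀ hQ]
      nlinarith [mul_pos hQ hf, mul_pos hf hf]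
    linarith
  · filter_upwards with s
    have hQ := Q_pos s
    have hf := pdf_pos s
    have : 0 < gaussPdf s ^ 2 / gaussQ s := by positivity
    linarith

/-- The Fisher-information clipping-loss function `g(s) = Q(s) + s φ(s) - φ(s)²/Q(s)` has
derivative `-(φ(s)/Q(s)²) (s Q(s) - φ(s))²`, is nonincreasing, and tends to `0` at `+∞`. -/
theorem clipping_loss_deriv_antitone_tendsto :
    (∀ s : ℝ, HasDerivAt (fun t => gaussQ t + t * gaussPdf t - (gaussPdf t) ^ 2 / gaussQ t)
      (-(gaussPdf s / (gaussQ s) ^ 2) * (s * gaussQ s - gaussPdf s) ^ 2) s) ∧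
    Antitone (fun s => gaussQ s + s * gaussPdf s - (gaussPdf s) ^ 2 / gaussQ s) ∧
    Filter.Tendsto (fun s => gaussQ s + s * gaussPdf s - (gaussPdf s) ^ 2 / gaussQ s)
      Filter.atTop (nhds 0) := by
  refine ⟨g_deriv, ?_, tends_g⟩
  apply antitone_of_deriv_nonpos
  · exact fun x => (g_deriv x).differentiableAt
  · intro x
    rw [(g_deriv x).deriv]
    have h1 : 0 ≤ gaussPdf x / gaussQ x ^ 2 := by
      exact div_nonneg (pdf_pos x).le (by positivity)
    have h2 : 0 ≤ (x * gaussQ x - gaussPdf x) ^ 2 := sq_nonneg _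
    nlinarith
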